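/- Every 1-skeletal simplicial set, i.e. a simplicial set in which every simplex of dimension ≥ 2 is degenerate (lies in the image of some degeneracy map), is 2-Segal. -/

import Mathlib

open CategoryTheory Simplicial

universe u

namespace Seg

/-- Restriction of a simplex along a monotone map of standard simplices. -/
def res (X : SSet.{u}) {m n : ℕ} (f : Fin (m + 1) →o Fin (n + 1)) : X _⦋n⦌ → X _⦋m⦌ :=
  X.map (SimplexCategory.mkHom f).op

/-- The monotone injection `[l] → [n]`, `k ↦ i + k`, i.e. the inclusion of the
interval `{i, i+1, …, i+l}` into `{0, …, n}`. -/
def interval {n : ℕ} (i l : ℕ) (h : i + l ≤ n) : Fin (l + 1) →o Fin (n + 1) where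
  toFun k := ⟨i + k.1, by have := k.isLt; omega⟩
  monotone' := by
    intro a b hab
    have h' : a.1 ≤ b.1 := hab
    simp only [Fin.mk_le_mk]
    omega

/-- The monotone injection with image `{0,…,i} ∪ {j,…,n}` (where `i < j ≤ n`). -/
def outer {n : ℕ} (i j : ℕ) (hij : i < j) (hj : j ≤ n) :
    Fin (n - (j - i) + 2) →o Fin (n + 1) where
  toFun k := ⟨if k.1 ≤ i then k.1 else k.1 + (j - i) - 1, by have := k.isLt; split <;> omega⟩
  monotone' := by
    intro a b hab
    have h' : a.1 ≤ b.1 := hab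
    have ha := a.isLt
    have hb := b.isLt
    simp only [Fin.mk_le_mk]
    split_ifs <;> omega

/-- The monotone map `[1] → [l]` sending `0 ↦ 0` and `1 ↦ l`. -/
def ends (l : ℕ) : Fin 2 →o Fin (l + 1) where
  toFun k := ⟨k.1 * l, by
    have hk : k.1 ≤ 1 := Nat.lt_succ_iff.mp k.isLt
    have h2 : k.1 * l ≤ 1 * l := Nat.mul_le_mul hk (le_refl l)
    omega⟩
  monotone' := by
    intro a b hab
    have h' : a.1 ≤ b.1 := hab
    simp only [Fin.mk_le_mk]
    exact Nat.mul_le_mul h' (le_refl l)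

/-- The map `[0] → [n]` picking out the vertex `i`. -/
def vert {n : ℕ} (i : ℕ) (h : i ≤ n) : Fin 1 →o Fin (n + 1) where
  toFun _ := ⟨i, by omega⟩
  monotone' := fun _ _ _ => le_refl _

/-- The monotone surjection `[m+1] → [m]` hitting `i` twice; restriction along it is the
degeneracy `s_i : X_m → X_{m+1}`. -/
def degen {m : ℕ} (i : ℕ) (h : i ≤ m) : Fin (m + 2) →o Fin (m + 1) where
  toFun k := ⟨if k.1 ≤ i then k.1 else k.1 - 1, by have := k.isLt; split <;> omega⟩
  monotone' := by
    intro a b hab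
    have h' : a.1 ≤ b.1 := hab
    simp only [Fin.mk_le_mk]
    split_ifs <;> omega

/-- The 2-Segal map associated to `0 ≤ i < j ≤ n`, i.e. the canonical map
`X_n → X_{{0,…,i}∪{j,…,n}} ×_{X_{{i,j}}} X_{{i,…,j}}`, is a bijection.  (A map into a
fiber product of sets is a bijection iff every compatible pair has a unique preimage.) -/
def TwoSegalMapBij (X : SSet.{u}) (n i j : ℕ) (hij : i < j) (hj : j ≤ n) : Prop :=
  ∀ (a : X _⦋n - (j - i) + 1⦌) (b : X _⦋j - i⦌),
    res X (interval i 1 (by omega)) a = res X (ends (j - i)) b →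
    ∃! x : X _⦋n⦌,
      res X (outer i j hij hj) x = a ∧ res X (interval i (j - i) (by omega)) x = b

/-- A simplicial set is 2-Segal if all the 2-Segal maps are bijections. -/
def IsTwoSegal (X : SSet.{u}) : Prop :=
  ∀ (n i j : ℕ), 3 ≤ n → ∀ (hij : i < j) (hj : j ≤ n), TwoSegalMapBij X n i j hij hj

/-- A simplicial set is Segal (1-Segal) if for each `n ≥ 2` the map
`X_n → X_1 ×_{X_0} ⋯ ×_{X_0} X_1` (restriction to the edges `{k,k+1}`) is a bijection. -/
def IsSegal (X : SSet.{u}) : Prop :=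
  ∀ (n : ℕ), 2 ≤ n → ∀ e : Fin n → X _⦋1⦌,
    (∀ (k : ℕ) (hk : k + 1 < n),
      res X (vert 1 (le_refl 1)) (e ⟨k, by omega⟩) =
        res X (vert 0 (Nat.zero_le 1)) (e ⟨k + 1, hk⟩)) →
    ∃! x : X _⦋n⦌, ∀ k : Fin n, res X (interval k.1 1 (by have := k.isLt; omega)) x = e k

end Seg

namespace Seg


/-- Truncation helper: the constant map to the point. -/
def constH (l : ℕ) : Fin (l + 1) →o Fin 1 where
  toFun _ := ⟨0, by omega⟩
  monotone' := fun _ _ _ => le_refl _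

/-- The map `[m+1] → [1]` sending `q ↦ 0` for `q ≤ p` and `1` otherwise. -/
def theta {m : ℕ} (p : ℕ) : Fin (m + 2) →o Fin 2 where
  toFun q := ⟨if q.1 ≤ p then 0 else 1, by split <;> omega⟩
  monotone' := by
    intro a b hab
    have h' : a.1 ≤ b.1 := hab
    simp only [Fin.mk_le_mk]
    split_ifs <;> omega

/-- The map `[l] → [1]` sending `0 ↦ 0` and everything else to `1`. -/
def cut (l : ℕ) : Fin (l + 1) →o Fin 2 where
  toFun q := ⟨if q.1 = 0 then 0 else 1, by split <;> omega⟩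
  monotone' := by
    intro a b hab
    have h' : a.1 ≤ b.1 := hab
    simp only [Fin.mk_le_mk]
    split_ifs <;> omega

/-- Retraction of `outer`: collapses the interval `{i,…,j}` onto the edge `{i,i+1}`. -/
def rho {n : ℕ} (i j : ℕ) (hij : i < j) (hj : j ≤ n) : Fin (n + 1) →o Fin (n - (j - i) + 2) where
  toFun p := ⟨if p.1 ≤ i then p.1 else if p.1 ≤ j then i + 1 else p.1 - (j - i) + 1, by
    have := p.isLt; split_ifs <;> omega⟩
  monotone' := by
    intro a b hab
    have h' : a.1 ≤ b.1 := hab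
    simp only [Fin.mk_le_mk]
    split_ifs <;> omega

/-- Retraction of `interval i (j-i)`: collapses the outer part onto the ends. -/
def tau {n : ℕ} (i j : ℕ) (hij : i < j) (hj : j ≤ n) : Fin (n + 1) →o Fin (j - i + 1) where
  toFun p := ⟨if p.1 ≤ i then 0 else if p.1 ≤ j then p.1 - i else j - i, by
    split_ifs <;> omega⟩
  monotone' := by
    intro a b hab
    have h' : a.1 ≤ b.1 := hab
    simp only [Fin.mk_le_mk]
    split_ifs <;> omega

lemma ohext {a b : ℕ} {f g : Fin (a + 1) →o Fin (b + 1)}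
    (h : ∀ q : Fin (a + 1), (f q).1 = (g q).1) : f = g :=
  OrderHom.ext _ _ (funext fun q => Fin.ext (h q))

lemma res_res (X : SSet.{u}) {k m n : ℕ} (f : Fin (m + 1) →o Fin (n + 1))
    (g : Fin (n + 1) →o Fin (k + 1)) (x : X _⦋k⦌) :
    res X f (res X g x) = res X (g.comp f) x := by
  simp only [res, ← FunctorToTypes.map_comp_apply, ← op_comp]
  rfl

lemma res_id (X : SSet.{u}) {n : ℕ} (x : X _⦋n⦌) : res X OrderHom.id x = x := by
  have h : (SimplexCategory.Hom.mk OrderHom.id : (⦋n⦌ : SimplexCategory) ⟶ ⦋n⦌) =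
      𝟙 (⦋n⦌ : SimplexCategory) := rfl
  simp [res, h]


/-- An edge is degenerate if it is the degeneracy of its initial vertex. -/
def DegE (X : SSet.{u}) (e : X _⦋1⦌) : Prop :=
  res X (constH 1) (res X (vert 0 (Nat.zero_le 1)) e) = e

lemma res_congr (X : SSet.{u}) {m n : ℕ} {f g : Fin (m + 1) →o Fin (n + 1)}
    (h : ∀ q : Fin (m + 1), (f q).1 = (g q).1) (z : X _⦋n⦌) : res X f z = res X g z := by
  rw [ohext h]

lemma degE_const (X : SSet.{u}) (v : X _⦋0⦌) : DegE X (res X (constH 1) v) := by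
  unfold DegE
  rw [res_res, res_res]
  exact res_congr X (fun q => by simp [constH, vert, OrderHom.comp, DFunLike.coe]) v

/-- If a spine edge of a simplex is degenerate, the simplex factors through the
corresponding degeneracy. -/
lemma lemB (X : SSet.{u})
    (hskel : ∀ (m : ℕ), 1 ≤ m → ∀ x : X _⦋m + 1⦌,
      ∃ (i : ℕ) (hi : i ≤ m) (y : X _⦋m⦌), res X (degen i hi) y = x) : ∀ m, 1 ≤ m → ∀ (x : X _⦋m + 1⦌) (k : ℕ) (hk : k ≤ m),
    DegE X (res X (interval k 1 (by omega)) x) →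
    ∃ y : X _⦋m⦌, x = res X (degen k hk) y := by
  refine Nat.le_induction ?_ ?_
  · -- base m = 1
    intro x k hk hdeg
    obtain ⟨i, hi, y, hy⟩ := hskel 1 (le_refl 1) x
    by_cases hik : i = k
    · subst hik; exact ⟨y, hy.symm⟩
    · subst hy
      have hdy : DegE X y := by
        have e : res X (interval k 1 (by omega : k + 1 ≤ 2)) (res X (degen i hi) y) = y := by
          rw [res_res]
          have e2 : ((degen i hi).comp (interval k 1 (by omega : k + 1 ≤ 2))) =
              OrderHom.id :=
            ohext fun q => by have hq := q.isLt; simp [degen, interval, OrderHom.comp, DFunLike.coe, -OrderHom.toFun_eq_coe, OrderHom.id]; first | omega | (split_ifs <;> omega) | (intro _h; omega) | (intro _h; split_ifs <;> omega)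
          rw [e2, res_id]
        rw [← e]; exact hdeg
      unfold DegE at hdy
      refine ⟨res X (constH 1) (res X (vert 0 (Nat.zero_le 1)) y), ?_⟩
      calc res X (degen i hi) y
          = res X (degen i hi) (res X (constH 1) (res X (vert 0 (Nat.zero_le 1)) y)) := by
            rw [hdy]
        _ = res X ((constH 1).comp (degen i hi)) (res X (vert 0 (Nat.zero_le 1)) y) :=
            res_res X _ _ _
        _ = res X ((constH 1).comp (degen k hk)) (res X (vert 0 (Nat.zero_le 1)) y) :=
            res_congr X (fun q => by simp [constH, degen, OrderHom.comp, DFunLike.coe]) _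
        _ = res X (degen k hk) (res X (constH 1) (res X (vert 0 (Nat.zero_le 1)) y)) :=
            (res_res X _ _ _).symm
  · -- step
    intro m hm ih x k hk hdeg
    obtain ⟨i, hi, y, hy⟩ := hskel (m + 1) (by omega) x
    by_cases hik : i = k
    · subst hik; exact ⟨y, hy.symm⟩
    · subst hy
      rcases Nat.lt_or_ge k i with hki | hki
      · -- k < i
        have hdy : DegE X (res X (interval k 1 (by omega : k + 1 ≤ m + 1)) y) := by
          have e : res X (interval k 1 (by omega : k + 1 ≤ m + 2)) (res X (degen i hi) y) =
              res X (interval k 1 (by omega : k + 1 ≤ m + 1)) y := by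
            rw [res_res]
            exact res_congr X
              (fun q => by have hq := q.isLt; simp [degen, interval, OrderHom.comp, DFunLike.coe]; first | omega | (split_ifs <;> omega) | (intro _h; omega) | (intro _h; split_ifs <;> omega)) y
          rw [← e]; exact hdeg
        obtain ⟨z, hz⟩ := ih y k (by omega) hdy
        refine ⟨res X (degen (i - 1) (by omega)) z, ?_⟩
        calc res X (degen i hi) y
            = res X (degen i hi) (res X (degen k (by omega : k ≤ m)) z) := by rw [← hz]
          _ = res X ((degen k (by omega : k ≤ m)).comp (degen i hi)) z := res_res X _ _ _
          _ = res X ((degen (i - 1) (by omega : i - 1 ≤ m)).comp (degen k hk)) z :=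
              res_congr X (fun q => by
                have hq := q.isLt; simp [degen, OrderHom.comp, DFunLike.coe]; first | omega | (split_ifs <;> omega) | (intro _h; omega) | (intro _h; split_ifs <;> omega)) z
          _ = res X (degen k hk) (res X (degen (i - 1) (by omega)) z) := (res_res X _ _ _).symm
      · -- i < k
        have hik' : i < k := by omega
        have hdy : DegE X (res X (interval (k - 1) 1 (by omega : k - 1 + 1 ≤ m + 1)) y) := by
          have e : res X (interval k 1 (by omega : k + 1 ≤ m + 2)) (res X (degen i hi) y) =
              res X (interval (k - 1) 1 (by omega : k - 1 + 1 ≤ m + 1)) y := by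
            rw [res_res]
            exact res_congr X
              (fun q => by have hq := q.isLt; simp [degen, interval, OrderHom.comp, DFunLike.coe]; first | omega | (split_ifs <;> omega) | (intro _h; omega) | (intro _h; split_ifs <;> omega)) y
          rw [← e]; exact hdeg
        obtain ⟨z, hz⟩ := ih y (k - 1) (by omega) hdy
        refine ⟨res X (degen i (by omega)) z, ?_⟩
        calc res X (degen i hi) y
            = res X (degen i hi) (res X (degen (k - 1) (by omega : k - 1 ≤ m)) z) := by
              rw [← hz]
          _ = res X ((degen (k - 1) (by omega : k - 1 ≤ m)).comp (degen i hi)) z :=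
              res_res X _ _ _
          _ = res X ((degen i (by omega : i ≤ m)).comp (degen k hk)) z :=
              res_congr X (fun q => by
                have hq := q.isLt; simp [degen, OrderHom.comp, DFunLike.coe]; first | omega | (split_ifs <;> omega) | (intro _h; omega) | (intro _h; split_ifs <;> omega)) z
          _ = res X (degen k hk) (res X (degen i (by omega)) z) := (res_res X _ _ _).symm

/-- A simplex of positive dimension is determined by its spine. -/
lemma lemA (X : SSet.{u})
    (hskel : ∀ (m : ℕ), 1 ≤ m → ∀ x : X _⦋m + 1⦌,
      ∃ (i : ℕ) (hi : i ≤ m) (y : X _⦋m⦌), res X (degen i hi) y = x) : ∀ m (x x' : X _⦋m + 1⦌),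
    (∀ (k : ℕ) (hk : k + 1 ≤ m + 1), res X (interval k 1 hk) x = res X (interval k 1 hk) x') →
    x = x' := by
  intro m
  induction m with
  | zero =>
    intro x x' h
    have h0 := h 0 (by omega)
    rwa [show (interval 0 1 (by omega : 0 + 1 ≤ 1) : Fin 2 →o Fin 2) = OrderHom.id from
      ohext fun q => by simp [interval], res_id, res_id] at h0
  | succ m ih =>
    intro x x' h
    obtain ⟨k, hk, y, hy⟩ := hskel (m + 1) (by omega) x
    have hdegx : DegE X (res X (interval k 1 (by omega : k + 1 ≤ m + 2)) x) := by
      have e : res X (interval k 1 (by omega : k + 1 ≤ m + 2)) x =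
          res X (constH 1) (res X (vert k (by omega : k ≤ m + 1)) y) := by
        calc res X (interval k 1 (by omega : k + 1 ≤ m + 2)) x
            = res X (interval k 1 (by omega : k + 1 ≤ m + 2)) (res X (degen k hk) y) := by
              rw [hy]
          _ = res X ((degen k hk).comp (interval k 1 (by omega : k + 1 ≤ m + 2))) y :=
              res_res X _ _ _
          _ = res X ((vert k (by omega : k ≤ m + 1)).comp (constH 1)) y :=
              res_congr X (fun q => by have hq := q.isLt; simp [degen, interval, vert, constH, OrderHom.comp, DFunLike.coe]; first | omega | (split_ifs <;> omega) | (intro _h; omega) | (intro _h; split_ifs <;> omega)) y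
          _ = res X (constH 1) (res X (vert k (by omega : k ≤ m + 1)) y) :=
              (res_res X _ _ _).symm
      rw [e]
      exact degE_const X _
    have hdegx' : DegE X (res X (interval k 1 (by omega : k + 1 ≤ m + 2)) x') := by
      rw [← h k (by omega)]; exact hdegx
    obtain ⟨y', hy'⟩ := lemB X hskel (m + 1) (by omega) x' k hk hdegx'
    have key : ∀ (z : X _⦋m + 1⦌) (q : ℕ) (hq : q + 1 ≤ m + 1) (p : ℕ)
        (hp : p + 1 ≤ m + 2), (p < k ∧ p = q) ∨ (k ≤ q ∧ p = q + 1) →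
        res X (interval p 1 hp) (res X (degen k hk) z) = res X (interval q 1 hq) z := by
      intro z q hq p hp hcase
      rw [res_res]
      exact res_congr X (fun t => by
        have ht := t.isLt
        simp [degen, interval, OrderHom.comp, DFunLike.coe]
        rcases hcase with ⟨h1, rfl⟩ | ⟨h1, rfl⟩ <;> first | omega | (split_ifs <;> omega) | (intro _h; omega) | (intro _h; split_ifs <;> omega)) z
    have hyy : y = y' := by
      apply ih
      intro q hq
      rcases Nat.lt_or_ge q k with hqk | hqk
      · have e1 := key y q hq q (by omega) (Or.inl ⟨hqk, rfl⟩)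
        have e2 := key y' q hq q (by omega) (Or.inl ⟨hqk, rfl⟩)
        rw [← e1, ← e2, hy, ← hy']
        exact h q (by omega)
      · have e1 := key y q hq (q + 1) (by omega) (Or.inr ⟨hqk, rfl⟩)
        have e2 := key y' q hq (q + 1) (by omega) (Or.inr ⟨hqk, rfl⟩)
        rw [← e1, ← e2, hy, ← hy']
        exact h (q + 1) (by omega)
    rw [← hy, hy', hyy]

/-- If the long edge of a simplex is degenerate, the simplex is a total degeneracy. -/
lemma lemC (X : SSet.{u})
    (hskel : ∀ (m : ℕ), 1 ≤ m → ∀ x : X _⦋m + 1⦌,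
      ∃ (i : ℕ) (hi : i ≤ m) (y : X _⦋m⦌), res X (degen i hi) y = x) : ∀ l (b : X _⦋l⦌), DegE X (res X (ends l) b) →
    b = res X (constH l) (res X (vert 0 (Nat.zero_le l)) b) := by
  intro l
  induction l with
  | zero =>
    intro b _
    rw [res_res]
    have e : ((vert 0 (Nat.zero_le 0)).comp (constH 0) : Fin 1 →o Fin 1) = OrderHom.id :=
      ohext fun q => by have hq := q.isLt; simp [vert, constH, OrderHom.comp, DFunLike.coe, -OrderHom.toFun_eq_coe, OrderHom.id] <;> omega
    rw [e, res_id]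
  | succ l ih =>
    cases l with
    | zero =>
      intro b hdeg
      have e : res X (ends 1) b = b := by
        have e2 : (ends 1 : Fin 2 →o Fin 2) = OrderHom.id := ohext fun q => by simp [ends]
        rw [e2, res_id]
      rw [e] at hdeg
      exact hdeg.symm
    | succ l' =>
      intro b hdeg
      obtain ⟨i, hi, y, hy⟩ := hskel (l' + 1) (by omega) b
      have hdy : DegE X (res X (ends (l' + 1)) y) := by
        have e : res X (ends (l' + 2)) b = res X (ends (l' + 1)) y := by
          rw [← hy, res_res]
          exact res_congr X (fun q => by
            rcases q with ⟨q, hq⟩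
            interval_cases q <;> simp [degen, ends, OrderHom.comp, DFunLike.coe] <;> omega) y
        rw [← e]; exact hdeg
      have hb := ih y hdy
      have hv : res X (vert 0 (Nat.zero_le (l' + 2))) b =
          res X (vert 0 (Nat.zero_le (l' + 1))) y := by
        rw [← hy, res_res]
        exact res_congr X (fun q => by
          have hq := q.isLt; simp [degen, vert, OrderHom.comp, DFunLike.coe] <;> omega) y
      rw [hv]
      calc b = res X (degen i hi) y := hy.symm
        _ = res X (degen i hi)
              (res X (constH (l' + 1)) (res X (vert 0 (Nat.zero_le (l' + 1))) y)) := by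
            rw [← hb]
        _ = res X ((constH (l' + 1)).comp (degen i hi))
              (res X (vert 0 (Nat.zero_le (l' + 1))) y) := res_res X _ _ _
        _ = res X (constH (l' + 2)) (res X (vert 0 (Nat.zero_le (l' + 1))) y) :=
            res_congr X (fun q => by simp [constH, degen, OrderHom.comp, DFunLike.coe]) _

/-- A simplex whose `p`-th spine edge is nondegenerate is the `theta`-degeneracy of
that edge. -/
lemma lemD (X : SSet.{u})
    (hskel : ∀ (m : ℕ), 1 ≤ m → ∀ x : X _⦋m + 1⦌,
      ∃ (i : ℕ) (hi : i ≤ m) (y : X _⦋m⦌), res X (degen i hi) y = x) : ∀ m (a : X _⦋m + 1⦌) (p : ℕ) (hp : p ≤ m),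
    ¬ DegE X (res X (interval p 1 (by omega)) a) →
    a = res X (theta p) (res X (interval p 1 (by omega : p + 1 ≤ m + 1)) a) := by
  intro m
  induction m with
  | zero =>
    intro a p hp _
    obtain rfl : p = 0 := by omega
    rw [res_res]
    have e : ((interval 0 1 (by omega : 0 + 1 ≤ 1)).comp (theta 0) : Fin 2 →o Fin 2) =
        OrderHom.id :=
      ohext fun q => by have hq := q.isLt; simp [interval, theta, OrderHom.comp, DFunLike.coe, -OrderHom.toFun_eq_coe, OrderHom.id]; first | omega | (split_ifs <;> omega) | (intro _h; omega) | (intro _h; split_ifs <;> omega)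
    rw [e, res_id]
  | succ m ih =>
    intro a p hp hnd
    obtain ⟨k, hk, y, hy⟩ := hskel (m + 1) (by omega) a
    by_cases hkp : k = p
    · exfalso
      apply hnd
      subst hkp
      have e : res X (interval k 1 (by omega : k + 1 ≤ m + 2)) a =
          res X (constH 1) (res X (vert k (by omega : k ≤ m + 1)) y) := by
        calc res X (interval k 1 (by omega : k + 1 ≤ m + 2)) a
            = res X (interval k 1 (by omega : k + 1 ≤ m + 2)) (res X (degen k hk) y) := by
              rw [hy]
          _ = res X ((degen k hk).comp (interval k 1 (by omega : k + 1 ≤ m + 2))) y :=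
              res_res X _ _ _
          _ = res X ((vert k (by omega : k ≤ m + 1)).comp (constH 1)) y :=
              res_congr X (fun q => by have hq := q.isLt; simp [degen, interval, vert, constH, OrderHom.comp, DFunLike.coe]; first | omega | (split_ifs <;> omega) | (intro _h; omega) | (intro _h; split_ifs <;> omega)) y
          _ = res X (constH 1) (res X (vert k (by omega : k ≤ m + 1)) y) :=
              (res_res X _ _ _).symm
      rw [e]
      exact degE_const X _
    · have hstep : ∀ (p2 : ℕ), p2 ≤ m → ((p < k ∧ p2 = p) ∨ (k < p ∧ p2 + 1 = p)) →
          a = res X (theta p) (res X (interval p 1 (by omega : p + 1 ≤ m + 2)) a) := by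
        intro p2 hp2 hcase
        have e1 : res X (interval p 1 (by omega : p + 1 ≤ m + 2)) a =
            res X (interval p2 1 (by omega : p2 + 1 ≤ m + 1)) y := by
          rw [← hy, res_res]
          exact res_congr X (fun t => by
            have ht := t.isLt
            simp [degen, interval, OrderHom.comp, DFunLike.coe]
            rcases hcase with ⟨h1, rfl⟩ | ⟨h1, h2⟩ <;> first | omega | (split_ifs <;> omega) | (intro _h; omega) | (intro _h; split_ifs <;> omega)) y
        have hnd' : ¬ DegE X (res X (interval p2 1 (by omega : p2 + 1 ≤ m + 1)) y) := by
          rw [← e1]; exact hnd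
        have hyd := ih y p2 hp2 hnd'
        calc a = res X (degen k hk) y := hy.symm
          _ = res X (degen k hk)
                (res X (theta p2) (res X (interval p2 1 (by omega : p2 + 1 ≤ m + 1)) y)) := by
              rw [← hyd]
          _ = res X ((theta p2).comp (degen k hk))
                (res X (interval p2 1 (by omega : p2 + 1 ≤ m + 1)) y) := res_res X _ _ _
          _ = res X (theta p) (res X (interval p2 1 (by omega : p2 + 1 ≤ m + 1)) y) :=
              res_congr X (fun t => by
                have ht := t.isLt
                simp [degen, theta, OrderHom.comp, DFunLike.coe]
                rcases hcase with ⟨h1, rfl⟩ | ⟨h1, h2⟩ <;> first | omega | (split_ifs <;> omega) | (intro _h; omega) | (intro _h; split_ifs <;> omega)) _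
          _ = res X (theta p) (res X (interval p 1 (by omega : p + 1 ≤ m + 2)) a) := by
              rw [e1]
      rcases Nat.lt_or_ge p k with hpk | hpk
      · exact hstep p (by omega) (Or.inl ⟨hpk, rfl⟩)
      · exact hstep (p - 1) (by omega) (Or.inr ⟨by omega, by omega⟩)


/-- Every 1-skeletal simplicial set (every simplex of dimension `≥ 2`, i.e. of dimension
`m + 1` with `m ≥ 1`, is in the image of some degeneracy map) is 2-Segal. -/
theorem oneSkeletal_isTwoSegal (X : SSet.{u})
    (hskel : ∀ (m : ℕ), 1 ≤ m → ∀ x : X _⦋m + 1⦌,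
      ∃ (i : ℕ) (hi : i ≤ m) (y : X _⦋m⦌), res X (degen i hi) y = x) :
    IsTwoSegal X := by
  intro n i j hn hij hj
  obtain ⟨n', rfl⟩ : ∃ n', n = n' + 1 := ⟨n - 1, by omega⟩
  intro a b hab
  have spine_det : ∀ (x : X _⦋n' + 1⦌),
      res X (outer i j hij hj) x = a →
      res X (interval i (j - i) (by omega)) x = b →
      ∀ (k : ℕ) (hk : k + 1 ≤ n' + 1),
        res X (interval k 1 hk) x =
          if h1 : k < i then res X (interval k 1 (by omega)) a
          else if h2 : k < j then res X (interval (k - i) 1 (by omega)) b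
          else res X (interval (k - (j - i) + 1) 1 (by omega)) a := by
    intro x hxa hxb k hk
    split_ifs with h1 h2
    · rw [← hxa, res_res]
      exact res_congr X (fun t => by have ht := t.isLt; simp [outer, interval, OrderHom.comp, DFunLike.coe]; first | omega | (split_ifs <;> omega)) x
    · rw [← hxb, res_res]
      exact res_congr X (fun t => by have ht := t.isLt; simp [interval, OrderHom.comp, DFunLike.coe]; omega) x
    · rw [← hxa, res_res]
      exact res_congr X (fun t => by have ht := t.isLt; simp [outer, interval, OrderHom.comp, DFunLike.coe]; first | omega | (split_ifs <;> omega)) x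
  have huniq : ∀ x₁ x₂ : X _⦋n' + 1⦌,
      (res X (outer i j hij hj) x₁ = a ∧ res X (interval i (j - i) (by omega)) x₁ = b) →
      (res X (outer i j hij hj) x₂ = a ∧ res X (interval i (j - i) (by omega)) x₂ = b) →
      x₁ = x₂ := by
    intro x₁ x₂ h1 h2
    apply lemA X hskel n' x₁ x₂
    intro k hk
    rw [spine_det x₁ h1.1 h1.2 k hk, spine_det x₂ h2.1 h2.2 k hk]
  by_cases hd : DegE X (res X (ends (j - i)) b)
  · -- degenerate long edge: push `a` forward along `rho`
    have hb := lemC X hskel (j - i) b hd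
    have hx1 : res X (outer i j hij hj) (res X (rho i j hij hj) a) = a := by
      rw [res_res]
      have e : (rho i j hij hj).comp (outer i j hij hj) = OrderHom.id :=
        ohext fun t => by have ht := t.isLt; simp [rho, outer, OrderHom.comp, DFunLike.coe, -OrderHom.toFun_eq_coe, OrderHom.id]; first | omega | (split_ifs <;> omega)
      rw [e, res_id]
    have hx2 : res X (interval i (j - i) (by omega : i + (j - i) ≤ n' + 1))
        (res X (rho i j hij hj) a) = b := by
      calc res X (interval i (j - i) (by omega : i + (j - i) ≤ n' + 1))
            (res X (rho i j hij hj) a)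
          = res X ((rho i j hij hj).comp (interval i (j - i) (by omega))) a := res_res X _ _ _
        _ = res X ((interval i 1 (by omega : i + 1 ≤ n' + 1 - (j - i) + 1)).comp
              (cut (j - i))) a :=
            res_congr X (fun t => by have ht := t.isLt; simp [rho, interval, cut, OrderHom.comp, DFunLike.coe, Fin.val_zero]; simp only [Fin.ext_iff, Fin.val_zero]; first | omega | (split_ifs <;> omega)) a
        _ = res X (cut (j - i)) (res X (interval i 1 (by omega)) a) := (res_res X _ _ _).symm
        _ = res X (cut (j - i)) (res X (ends (j - i)) b) :=
            congrArg (res X (cut (j - i))) hab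
        _ = res X (cut (j - i)) (res X (ends (j - i))
              (res X (constH (j - i)) (res X (vert 0 (Nat.zero_le (j - i))) b))) :=
            congrArg (fun z => res X (cut (j - i)) (res X (ends (j - i)) z)) hb
        _ = res X ((constH (j - i)).comp ((ends (j - i)).comp (cut (j - i))))
              (res X (vert 0 (Nat.zero_le (j - i))) b) := by rw [res_res, res_res]
        _ = res X (constH (j - i)) (res X (vert 0 (Nat.zero_le (j - i))) b) :=
            res_congr X (fun t => by simp [constH, ends, cut, OrderHom.comp, DFunLike.coe]) _
        _ = b := hb.symm
    exact ⟨res X (rho i j hij hj) a, ⟨hx1, hx2⟩,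
      fun y hy => huniq y (res X (rho i j hij hj) a) hy ⟨hx1, hx2⟩⟩
  · -- nondegenerate long edge: push `b` forward along `tau`
    have hnd : ¬ DegE X (res X
        (interval i 1 (by omega : i + 1 ≤ n' + 1 - (j - i) + 1)) a) := by
      intro hcon
      apply hd
      rw [← hab]
      exact hcon
    have hda := lemD X hskel (n' + 1 - (j - i)) a i (by omega) hnd
    have hx1 : res X (outer i j hij hj) (res X (tau i j hij hj) b) = a := by
      calc res X (outer i j hij hj) (res X (tau i j hij hj) b)
          = res X ((tau i j hij hj).comp (outer i j hij hj)) b := res_res X _ _ _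
        _ = res X ((ends (j - i)).comp (theta i)) b :=
            res_congr X (fun t => by have ht := t.isLt; simp [tau, outer, ends, theta, OrderHom.comp, DFunLike.coe]; first | omega | (split_ifs <;> (first | omega | simp))) b
        _ = res X (theta i) (res X (ends (j - i)) b) := (res_res X _ _ _).symm
        _ = res X (theta i) (res X (interval i 1 (by omega)) a) :=
            (congrArg (res X (theta i)) hab).symm
        _ = a := hda.symm
    have hx2 : res X (interval i (j - i) (by omega : i + (j - i) ≤ n' + 1))
        (res X (tau i j hij hj) b) = b := by
      rw [res_res]
      have e : (tau i j hij hj).comp (interval i (j - i) (by omega)) = OrderHom.id :=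
        ohext fun t => by have ht := t.isLt; simp [tau, interval, OrderHom.comp, DFunLike.coe, -OrderHom.toFun_eq_coe, OrderHom.id, Fin.val_zero]; simp only [Fin.ext_iff, Fin.val_zero]; first | omega | (split_ifs <;> omega)
      rw [e, res_id]
    exact ⟨res X (tau i j hij hj) b, ⟨hx1, hx2⟩,
      fun y hy => huniq y (res X (tau i j hij hj) b) hy ⟨hx1, hx2⟩⟩

end Seg
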